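/- Let X ∈ ℝ^{n×p} with n ≤ p and rank(X) = n, and let μ>0. Then the matrix M := Xᵀ(XXᵀ)⁻¹X − (XᵀX + μnI_p)⁻¹XᵀX is positive semidefinite, and tr(M) = Σ_{i=1}^n μ/(λ̃ᵢ + μ), where λ̃₁,…,λ̃ₙ are the eigenvalues of (1/n)XXᵀ. Consequently, for any diagonal positive semidefinite Σ ∈ ℝ^{p×p} with ‖Σ‖₂ ≤ c, one has tr(Σ·M) ≤ c·n·μ/min_i λ̃ᵢ. -/

import Mathlib

open Matrix

private lemma aux_mul {n : ℕ} (U D E : Matrix (Fin n) (Fin n) ℝ)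
    (hU2 : star U * U = 1) :
    (U * D * star U) * (U * E * star U) = U * (D * E) * star U := by
  simp only [Matrix.mul_assoc]
  rw [← Matrix.mul_assoc (star U) U, hU2, Matrix.one_mul]

private lemma aux_inv {n : ℕ} (U : Matrix (Fin n) (Fin n) ℝ)
    (hU1 : U * star U = 1) (hU2 : star U * U = 1)
    (v : Fin n → ℝ) (hv : ∀ i, v i ≠ 0) :
    (U * diagonal v * star U)⁻¹ = U * diagonal (fun i => (v i)⁻¹) * star U := by
  apply Matrix.inv_eq_right_inv
  rw [aux_mul U _ _ hU2, diagonal_mul_diagonal]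
  have h : (fun i => v i * (v i)⁻¹) = fun _ : Fin n => (1:ℝ) :=
    funext fun i => mul_inv_cancel₀ (hv i)
  rw [h, diagonal_one, Matrix.mul_one, hU1]

private lemma aux_trace {n : ℕ} (U E : Matrix (Fin n) (Fin n) ℝ)
    (hU2 : star U * U = 1) :
    Matrix.trace (U * E * star U) = Matrix.trace E := by
  rw [trace_mul_cycle, hU2, Matrix.one_mul]

theorem stmt14 (n p : ℕ) (hn : 0 < n) (hnp : n ≤ p) (μ : ℝ) (hμ : 0 < μ)
    (X : Matrix (Fin n) (Fin p) ℝ) (hrank : X.rank = n)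
    (M : Matrix (Fin p) (Fin p) ℝ)
    (hM : M = Xᵀ * (X * Xᵀ)⁻¹ * X -
      (Xᵀ * X + (μ * n) • (1 : Matrix (Fin p) (Fin p) ℝ))⁻¹ * (Xᵀ * X))
    (hH : (((1:ℝ)/n) • (X * Xᵀ)).IsHermitian) :
    M.PosSemidef ∧
    Matrix.trace M = ∑ i, μ / (hH.eigenvalues i + μ) ∧
    ∀ (c : ℝ) (d : Fin p → ℝ), (Matrix.diagonal d).PosSemidef → (∀ i, d i ≤ c) →
      Matrix.trace (Matrix.diagonal d * M) ≤ c * n * μ / (⨅ i, hH.eigenvalues i) := by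
  classical
  have hn' : (0:ℝ) < n := by exact_mod_cast hn
  have hnne : (n:ℝ) ≠ 0 := ne_of_gt hn'
  have ha : (0:ℝ) < μ * n := mul_pos hμ hn'
  set a : ℝ := μ * n with ha_def
  set A : Matrix (Fin n) (Fin n) ℝ := X * Xᵀ with hA_def
  set lam : Fin n → ℝ := hH.eigenvalues with hlam_def
  have hXT : Xᴴ = Xᵀ := conjTranspose_eq_transpose_of_trivial X
  have hApsd : A.PosSemidef := by
    have := posSemidef_self_mul_conjTranspose X
    rwa [hXT] at this
  -- B = (1/n) • A is positive semidefinite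
  have hBpsd : (((1:ℝ)/n) • A).PosSemidef := by
    exact hApsd.smul (by positivity)
  -- rank of B is n
  have hrB : (((1:ℝ)/n) • A).rank = n := by
    have h1 : ((1:ℝ)/n) • A = (diagonal (fun _ : Fin n => (1:ℝ)/n)) * A := by
      rw [← smul_eq_diagonal_mul]
    rw [h1, rank_mul_eq_right_of_isUnit_det]
    · rw [hA_def, rank_self_mul_transpose, hrank]
    · rw [det_diagonal, Finset.prod_const]
      exact isUnit_iff_ne_zero.mpr (pow_ne_zero _ (one_div_ne_zero hnne))
  -- eigenvalues are positive
  have hcard : Fintype.card {i // lam i ≠ 0} = n := by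
    rw [hlam_def, ← hH.rank_eq_card_non_zero_eigs, hrB]
  have hlampos : ∀ i, 0 < lam i := by
    intro i
    rcases (hBpsd.eigenvalues_nonneg i).lt_or_eq with h | h
    · exact h
    · exfalso
      have hzero : lam i = 0 := h.symm
      have hlt := Fintype.card_subtype_lt (p := fun i => lam i ≠ 0) (x := i)
        (by simp [hzero])
      rw [hcard, Fintype.card_fin] at hlt
      exact lt_irrefl _ hlt
  -- spectral decomposition
  set U : Matrix (Fin n) (Fin n) ℝ := (hH.eigenvectorUnitary : Matrix (Fin n) (Fin n) ℝ) with hU_def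
  have hU1 : U * star U = 1 := mem_unitaryGroup_iff.mp hH.eigenvectorUnitary.2
  have hU2 : star U * U = 1 := mem_unitaryGroup_iff'.mp hH.eigenvectorUnitary.2
  have hdiag_smul : diagonal (fun i => (n:ℝ) * lam i)
      = (n:ℝ) • diagonal (RCLike.ofReal ∘ hH.eigenvalues) := by
    rw [← diagonal_smul]
    congr 1
  have hspec : A = U * diagonal (fun i => (n:ℝ) * lam i) * star U := by
    have h := hH.spectral_theorem
    calc A = (n:ℝ) • (((1:ℝ)/n) • A) := by
          rw [smul_smul, mul_one_div, div_self hnne, one_smul]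
      _ = (n:ℝ) • (U * diagonal (RCLike.ofReal ∘ hH.eigenvalues) * star U) := by rw [Unitary.conjStarAlgAut_apply] at h; rw [← h]
      _ = U * diagonal (fun i => (n:ℝ) * lam i) * star U := by
          rw [hdiag_smul, ← Matrix.smul_mul, ← Matrix.mul_smul]
  -- A + a•1 spectral form
  have hT : A + a • (1 : Matrix (Fin n) (Fin n) ℝ)
      = U * diagonal (fun i => (n:ℝ) * lam i + a) * star U := by
    have h1 : diagonal (fun i => (n:ℝ) * lam i + a)
        = diagonal (fun i => (n:ℝ) * lam i) + diagonal (fun _ : Fin n => a) :=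
      (diagonal_add _ _).symm
    rw [h1, Matrix.mul_add, Matrix.add_mul, ← hspec]
    congr 1
    rw [← smul_one_eq_diagonal, Matrix.mul_smul, Matrix.mul_one, Matrix.smul_mul, hU1]
  -- inverses
  have hAinv : A⁻¹ = U * diagonal (fun i => ((n:ℝ) * lam i)⁻¹) * star U := by
    rw [hspec]
    exact aux_inv U hU1 hU2 _ (fun i => (mul_pos hn' (hlampos i)).ne')
  have hTinv : (A + a • (1 : Matrix (Fin n) (Fin n) ℝ))⁻¹
      = U * diagonal (fun i => ((n:ℝ) * lam i + a)⁻¹) * star U := by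
    rw [hT]
    exact aux_inv U hU1 hU2 _
      (fun i => (add_pos (mul_pos hn' (hlampos i)) ha).ne')
  -- invertibility facts
  have hTpd : (A + a • (1 : Matrix (Fin n) (Fin n) ℝ)).PosDef := by
    apply Matrix.PosDef.posSemidef_add hApsd
    rw [smul_one_eq_diagonal]
    exact posDef_diagonal_iff.mpr (fun _ => ha)
  have hTTinv : (A + a • (1 : Matrix (Fin n) (Fin n) ℝ))
      * (A + a • (1 : Matrix (Fin n) (Fin n) ℝ))⁻¹ = 1 :=
    Matrix.mul_nonsing_inv _ hTpd.det_pos.ne'.isUnit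
  have hSpd : (Xᵀ * X + a • (1 : Matrix (Fin p) (Fin p) ℝ)).PosDef := by
    apply Matrix.PosDef.posSemidef_add
    · have := posSemidef_conjTranspose_mul_self X
      rwa [hXT] at this
    · rw [smul_one_eq_diagonal]
      exact posDef_diagonal_iff.mpr (fun _ => ha)
  have hSinvS : (Xᵀ * X + a • (1 : Matrix (Fin p) (Fin p) ℝ))⁻¹
      * (Xᵀ * X + a • (1 : Matrix (Fin p) (Fin p) ℝ)) = 1 :=
    Matrix.nonsing_inv_mul _ hSpd.det_pos.ne'.isUnit
  -- push-through identity
  set S : Matrix (Fin p) (Fin p) ℝ := Xᵀ * X + a • (1 : Matrix (Fin p) (Fin p) ℝ) with hS_def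
  set T : Matrix (Fin n) (Fin n) ℝ := A + a • (1 : Matrix (Fin n) (Fin n) ℝ) with hT_def
  have key : S * Xᵀ = Xᵀ * T := by
    rw [hS_def, hT_def, hA_def, Matrix.add_mul, Matrix.mul_add,
      Matrix.smul_mul, Matrix.mul_smul, Matrix.one_mul, Matrix.mul_one,
      Matrix.mul_assoc]
  have h1 : Xᵀ * T⁻¹ = S⁻¹ * Xᵀ := by
    calc Xᵀ * T⁻¹ = S⁻¹ * S * (Xᵀ * T⁻¹) := by rw [hSinvS, Matrix.one_mul]
      _ = S⁻¹ * (S * Xᵀ) * T⁻¹ := by simp only [Matrix.mul_assoc]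
      _ = S⁻¹ * (Xᵀ * T) * T⁻¹ := by rw [key]
      _ = S⁻¹ * Xᵀ * (T * T⁻¹) := by simp only [Matrix.mul_assoc]
      _ = S⁻¹ * Xᵀ := by rw [hTTinv, Matrix.mul_one]
  have hMeq : M = Xᵀ * (A⁻¹ - T⁻¹) * X := by
    rw [hM, ← Matrix.mul_assoc, ← h1, Matrix.mul_sub, Matrix.sub_mul]
  -- the middle matrix
  set g : Fin n → ℝ := fun i => ((n:ℝ) * lam i)⁻¹ - ((n:ℝ) * lam i + a)⁻¹ with hg_def
  have hC : A⁻¹ - T⁻¹ = U * diagonal g * star U := by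
    rw [hAinv, hT_def, hTinv, ← Matrix.sub_mul, ← Matrix.mul_sub, ← diagonal_sub]
  have hgnonneg : ∀ i, 0 ≤ g i := by
    intro i
    have h1 : 0 < (n:ℝ) * lam i := mul_pos hn' (hlampos i)
    have h2 : ((n:ℝ) * lam i + a)⁻¹ ≤ ((n:ℝ) * lam i)⁻¹ :=
      inv_anti₀ h1 (le_add_of_nonneg_right ha.le)
    simpa [hg_def, sub_nonneg] using h2
  have hCpsd : (A⁻¹ - T⁻¹).PosSemidef := by
    rw [hC]
    have hd : (diagonal g).PosSemidef := PosSemidef.diagonal hgnonneg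
    have := hd.mul_mul_conjTranspose_same U
    rwa [← star_eq_conjTranspose] at this
  have hMpsd : M.PosSemidef := by
    rw [hMeq]
    have := hCpsd.conjTranspose_mul_mul_same X
    rwa [hXT] at this
  -- trace
  have htr : Matrix.trace M = ∑ i, μ / (lam i + μ) := by
    rw [hMeq, trace_mul_cycle, ← hA_def, hC, hspec, aux_mul U _ _ hU2,
      aux_trace U _ hU2, diagonal_mul_diagonal, trace_diagonal]
    apply Finset.sum_congr rfl
    intro i _
    have h1 : (n:ℝ) * lam i ≠ 0 := (mul_pos hn' (hlampos i)).ne'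
    have h2 : (n:ℝ) * lam i + a ≠ 0 := (add_pos (mul_pos hn' (hlampos i)) ha).ne'
    have h3 : lam i + μ ≠ 0 := (add_pos (hlampos i) hμ).ne'
    have h4 : lam i ≠ 0 := (hlampos i).ne'
    rw [hg_def, ha_def]
    field_simp
    ring
  refine ⟨hMpsd, htr, ?_⟩
  -- final bound
  intro c d hd hdc
  have hd0 : ∀ i, 0 ≤ d i := posSemidef_diagonal_iff.mp hd
  have hp : 0 < p := lt_of_lt_of_le hn hnp
  have hc0 : 0 ≤ c := le_trans (hd0 ⟨0, hp⟩) (hdc ⟨0, hp⟩)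
  have hMdiag : ∀ j, 0 ≤ M j j := by
    intro j
    exact hMpsd.diag_nonneg
  have htrd : Matrix.trace (Matrix.diagonal d * M) = ∑ j, d j * M j j := by
    simp [Matrix.trace, Matrix.diag, Matrix.diagonal_mul]
  have hstep1 : Matrix.trace (Matrix.diagonal d * M) ≤ c * Matrix.trace M := by
    rw [htrd, Matrix.trace, Finset.mul_sum]
    exact Finset.sum_le_sum fun j _ => mul_le_mul_of_nonneg_right (hdc j) (hMdiag j)
  haveI : Nonempty (Fin n) := ⟨⟨0, hn⟩⟩
  obtain ⟨i₀, _, hi₀⟩ := Finset.exists_min_image Finset.univ lam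
    ⟨⟨0, hn⟩, Finset.mem_univ _⟩
  have hi₀' : ∀ i, lam i₀ ≤ lam i := fun i => hi₀ i (Finset.mem_univ i)
  have hinf : (⨅ i, hH.eigenvalues i) = lam i₀ :=
    le_antisymm (ciInf_le (Finite.bddBelow_range _) i₀) (le_ciInf hi₀')
  have hbound : Matrix.trace M ≤ n * (μ / lam i₀) := by
    rw [htr]
    calc ∑ i, μ / (lam i + μ) ≤ ∑ _i : Fin n, μ / lam i₀ := by
          apply Finset.sum_le_sum
          intro i _
          apply div_le_div_of_nonneg_left hμ.le (hlampos i₀)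
          calc lam i₀ ≤ lam i := hi₀' i
            _ ≤ lam i + μ := le_add_of_nonneg_right hμ.le
      _ = n * (μ / lam i₀) := by
          rw [Finset.sum_const, Finset.card_univ, Fintype.card_fin, nsmul_eq_mul]
  calc Matrix.trace (Matrix.diagonal d * M) ≤ c * Matrix.trace M := hstep1
    _ ≤ c * (n * (μ / lam i₀)) := mul_le_mul_of_nonneg_left hbound hc0
    _ = c * n * μ / (⨅ i, hH.eigenvalues i) := by rw [hinf]; ring
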